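/- Let f : [0,R) → ℝ be continuously differentiable with f(0) = 0, f'(0) = -1, f' convex and strictly increasing. Let β > 0, λ ≥ 0, h(t) = β + λ t + f(t), g(t) = β + f(t) (so g' = f'). Assume h has a zero in (0,R). Then h has a smallest zero t* ∈ (0,R), h is strictly convex, and for all t ∈ [0, t*): h(t) > 0, g'(t) < 0, and t < t - h(t)/g'(t) < t*. Moreover g'(t*) ≤ -λ ≤ 0. -/

import Mathlib

open Set Filter Topology

/-- The auxiliary function `h(t) = β + λ t + f(t)` has a smallest zero `t* ∈ (0,R)`,
is strictly convex, and for `t ∈ [0,t*)`: `h(t) > 0`, `f'(t) < 0` and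
`t < t - h(t)/f'(t) < t*`. Moreover `f'(t*) ≤ -λ ≤ 0`. -/
theorem aux_function_smallest_zero (R β lam : ℝ) (hR : 0 < R) (hβ : 0 < β) (hlam : 0 ≤ lam)
    (f f' : ℝ → ℝ)
    (hder : ∀ t ∈ Ico (0:ℝ) R, HasDerivWithinAt f (f' t) (Ico (0:ℝ) R) t)
    (hf0 : f 0 = 0) (hf'0 : f' 0 = -1)
    (hconv : ConvexOn ℝ (Ico (0:ℝ) R) f')
    (hmono : StrictMonoOn f' (Ico (0:ℝ) R))
    (h : ℝ → ℝ) (hh : h = fun t => β + lam * t + f t)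
    (hzero : ∃ t ∈ Ioo (0:ℝ) R, h t = 0) :
    ∃ tstar ∈ Ioo (0:ℝ) R,
      h tstar = 0 ∧
      (∀ t ∈ Ioo (0:ℝ) R, h t = 0 → tstar ≤ t) ∧
      StrictConvexOn ℝ (Ico (0:ℝ) R) h ∧
      (∀ t ∈ Ico (0:ℝ) tstar,
          0 < h t ∧ f' t < 0 ∧ t < t - h t / f' t ∧ t - h t / f' t < tstar) ∧
      f' tstar ≤ -lam ∧ -lam ≤ 0 := by
  obtain ⟨t0, ht0, ht0z⟩ := hzero
  have hcontf : ContinuousOn f (Ico (0:ℝ) R) := fun t ht => (hder t ht).continuousWithinAt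
  have hcont : ContinuousOn h (Ico (0:ℝ) R) := by
    rw [hh]
    exact (continuousOn_const.add (continuousOn_const.mul continuousOn_id)).add hcontf
  have hD : ∀ t ∈ Ioo (0:ℝ) R, HasDerivAt h (lam + f' t) t := by
    intro t ht
    have hf : HasDerivAt f (f' t) t :=
      (hder t (Ioo_subset_Ico_self ht)).hasDerivAt (Ico_mem_nhds ht.1 ht.2)
    rw [hh]
    have := ((hasDerivAt_const t β).add ((hasDerivAt_id t).const_mul lam)).add hf
    simp at this; exact this
  have h0 : h 0 = β := by rw [hh]; simp [hf0]
  -- the smallest zero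
  set S : Set ℝ := Icc 0 t0 ∩ h ⁻¹' {0} with hS
  have hIccsub : Icc (0:ℝ) t0 ⊆ Ico (0:ℝ) R := fun x hx => ⟨hx.1, lt_of_le_of_lt hx.2 ht0.2⟩
  have hSclosed : IsClosed S :=
    (hcont.mono hIccsub).preimage_isClosed_of_isClosed isClosed_Icc isClosed_singleton
  have ht0S : t0 ∈ S := ⟨⟨ht0.1.le, le_refl _⟩, ht0z⟩
  have hSbdd : BddBelow S := ⟨0, fun x hx => hx.1.1⟩
  set tstar := sInf S with htsdef
  have htsS : tstar ∈ S := hSclosed.csInf_mem ⟨t0, ht0S⟩ hSbdd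
  have htsz : h tstar = 0 := htsS.2
  have hts_le : tstar ≤ t0 := csInf_le hSbdd ht0S
  have hts_pos : 0 < tstar := by
    rcases lt_or_eq_of_le htsS.1.1 with hp | hp
    · exact hp
    · exfalso; rw [← hp] at htsz; rw [h0] at htsz; linarith
  have htsIoo : tstar ∈ Ioo (0:ℝ) R := ⟨hts_pos, lt_of_le_of_lt hts_le ht0.2⟩
  have hmin : ∀ t ∈ Ioo (0:ℝ) R, h t = 0 → tstar ≤ t := by
    intro t ht htz
    by_cases hle : t ≤ t0
    · exact csInf_le hSbdd ⟨⟨ht.1.le, hle⟩, htz⟩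
    · linarith
  -- positivity on [0, tstar)
  have hpos : ∀ t ∈ Ico (0:ℝ) tstar, 0 < h t := by
    intro t ht
    by_contra hle
    push_neg at hle
    have hsub : Icc (0:ℝ) t ⊆ Ico (0:ℝ) R :=
      fun x hx => ⟨hx.1, lt_trans (lt_of_le_of_lt hx.2 ht.2) htsIoo.2⟩
    have := intermediate_value_Icc' ht.1 (hcont.mono hsub)
      (⟨hle, by rw [h0]; exact hβ.le⟩ : (0:ℝ) ∈ Icc (h t) (h 0))
    obtain ⟨s, hs, hsz⟩ := this
    have hs_pos : 0 < s := by
      rcases lt_or_eq_of_le hs.1 with hp | hp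
      · exact hp
      · exfalso; rw [← hp, h0] at hsz; linarith
    have : tstar ≤ s := hmin s ⟨hs_pos, lt_trans (lt_of_le_of_lt hs.2 ht.2) htsIoo.2⟩ hsz
    linarith [lt_of_le_of_lt hs.2 ht.2]
  -- main estimates on [0, tstar)
  have hmain : ∀ t ∈ Ico (0:ℝ) tstar,
      0 < h t ∧ f' t < 0 ∧ t < t - h t / f' t ∧ t - h t / f' t < tstar := by
    intro t ht
    have htpos := hpos t ht
    have htR : t ∈ Ico (0:ℝ) R := ⟨ht.1, lt_trans ht.2 htsIoo.2⟩
    have hsub : Icc t tstar ⊆ Ico (0:ℝ) R :=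
      fun x hx => ⟨le_trans ht.1 hx.1, lt_of_le_of_lt hx.2 htsIoo.2⟩
    obtain ⟨c, hc, hceq⟩ := exists_hasDerivAt_eq_slope h (fun x => lam + f' x) ht.2
      (hcont.mono hsub)
      (fun x hx => hD x ⟨lt_of_le_of_lt ht.1 hx.1, lt_trans hx.2 htsIoo.2⟩)
    have hcR : c ∈ Ico (0:ℝ) R := ⟨le_trans ht.1 hc.1.le, lt_trans hc.2 htsIoo.2⟩
    have hsub_pos : 0 < tstar - t := by linarith [ht.2]
    have hslope : lam + f' c < 0 := by
      rw [hceq, htsz]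
      exact div_neg_of_neg_of_pos (by linarith) hsub_pos
    have hf'lt : f' t < f' c := hmono htR hcR hc.1
    have hf'neg : f' t < 0 := by linarith
    have e1 : (lam + f' c) * (tstar - t) = 0 - h t := by
      rw [hceq, htsz, div_mul_cancel₀]
      linarith
    have key : h t < (-f' t) * (tstar - t) := by nlinarith
    have hq : h t / (-f' t) < tstar - t := (div_lt_iff₀ (by linarith)).mpr (by linarith)
    have hdn : h t / (-f' t) = -(h t / f' t) := by rw [div_neg]
    have hdiv_pos : 0 < h t / (-f' t) := div_pos htpos (by linarith)
    exact ⟨htpos, hf'neg, by linarith, by linarith⟩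
  -- strict convexity
  have hsc : StrictConvexOn ℝ (Ico (0:ℝ) R) h := by
    apply StrictMonoOn.strictConvexOn_of_deriv (convex_Ico 0 R) hcont
    rw [interior_Ico]
    intro x hx y hy hxy
    rw [(hD x hx).deriv, (hD y hy).deriv]
    have := hmono (Ioo_subset_Ico_self hx) (Ioo_subset_Ico_self hy) hxy
    linarith
  -- derivative bound at tstar
  have hderle : f' tstar ≤ -lam := by
    have H := hD tstar htsIoo
    have T : Tendsto (slope h tstar) (𝓝[<] tstar) (𝓝 (lam + f' tstar)) :=
      (hasDerivAt_iff_tendsto_slope.mp H).mono_left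
        (nhdsWithin_mono _ fun x hx => ne_of_lt hx)
    have ev : ∀ᶠ x in 𝓝[<] tstar, slope h tstar x ≤ 0 := by
      filter_upwards [Ioo_mem_nhdsLT_of_mem (⟨hts_pos, le_refl tstar⟩ : tstar ∈ Ioc 0 tstar)]
        with x hx
      have hxpos := hpos x ⟨hx.1.le, hx.2⟩
      rw [slope_def_field, htsz]
      have : x - tstar < 0 := by linarith [hx.2]
      exact le_of_lt (div_neg_of_pos_of_neg (by linarith) this)
    have : lam + f' tstar ≤ 0 := le_of_tendsto T ev
    linarith
  exact ⟨tstar, htsIoo, htsz, hmin, hsc, hmain, hderle, by linarith⟩
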